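/- Let t_1,…,t_5 be positive reals satisfying Assumption 1. Then, as T → ∞, E_AA(T) + E_AB(T) = (1/384)·(Σ_{{s_1,s_2,s_3,s_4} ⊂ {t_1,…,t_5}} 1/(s_1 s_2 s_3 s_4))·T^4 + (Σ_{{s_1,s_2,s_3,s_4} ⊂ {t_1,…,t_5}} R(2s_1,2s_2,2s_3,2s_4) − (1/96)·(2/(t_2 t_4 t_5) + 2/(t_1 t_4 t_5) + t_3/(t_1 t_2 t_4 t_5) + 1/(t_1 t_2 t_4) + 1/(t_1 t_2 t_5)))·T^3 + o(T^3), where both sums run over all five 4-element subsets of {t_1,…,t_5}. -/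

import Mathlib

open Filter Asymptotics

/-- `W(s₁, …, s_m; T)`: the number of `m`-tuples of nonnegative integers `(n₁, …, n_m)` with
`s₁ n₁ + ⋯ + s_m n_m ≤ T`. -/
noncomputable def W {m : ℕ} (s : Fin m → ℝ) (T : ℝ) : ℕ :=
  Nat.card {n : Fin m → ℕ | ∑ i, (n i : ℝ) * s i ≤ T}

/-- `E_AA(T) = W(2t₁,2t₃,2t₄,2t₅;T) + W(2t₂,2t₃,2t₄,2t₅;T) − W(2t₁,2t₄,2t₅;T)
  − W(2t₂,2t₄,2t₅;T) + W(2t₁,2t₂;T) + W(2t₁;T) + W(2t₂;T)`. -/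
noncomputable def EAA (t₁ t₂ t₃ t₄ t₅ T : ℝ) : ℤ :=
  (W ![2*t₁, 2*t₃, 2*t₄, 2*t₅] T : ℤ) + (W ![2*t₂, 2*t₃, 2*t₄, 2*t₅] T : ℤ)
    - (W ![2*t₁, 2*t₄, 2*t₅] T : ℤ) - (W ![2*t₂, 2*t₄, 2*t₅] T : ℤ)
    + (W ![2*t₁, 2*t₂] T : ℤ) + (W ![2*t₁] T : ℤ) + (W ![2*t₂] T : ℤ)

/-- `E_AB(T) = W(2t₁,2t₂,2t₄,2t₅;T−t₃) + W(2t₁,2t₂,2t₃,2t₅;T−t₃) + W(2t₁,2t₂,2t₃,2t₄;T−t₃)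
  − W(2t₁,2t₂;T−t₃)`. -/
noncomputable def EAB (t₁ t₂ t₃ t₄ t₅ T : ℝ) : ℤ :=
  (W ![2*t₁, 2*t₂, 2*t₄, 2*t₅] (T - t₃) : ℤ) + (W ![2*t₁, 2*t₂, 2*t₃, 2*t₅] (T - t₃) : ℤ)
    + (W ![2*t₁, 2*t₂, 2*t₃, 2*t₄] (T - t₃) : ℤ) - (W ![2*t₁, 2*t₂] (T - t₃) : ℤ)

lemma hpoly (a b c : ℝ) : (fun T : ℝ => a*T^2 + b*T + c) =o[atTop] fun T : ℝ => T^3 := by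
  have h2 : (fun T : ℝ => T^2) =o[atTop] fun T : ℝ => T^3 :=
    isLittleO_pow_pow_atTop_of_lt (by norm_num)
  have h1 : (fun T : ℝ => T^1) =o[atTop] fun T : ℝ => T^3 :=
    isLittleO_pow_pow_atTop_of_lt (by norm_num)
  have ht : Tendsto (fun T : ℝ => ‖T^3‖) atTop atTop :=
    tendsto_abs_atTop_atTop.comp (tendsto_pow_atTop (n := 3) (by norm_num))
  have h0 : (fun _ : ℝ => c) =o[atTop] fun T : ℝ => T^3 :=
    isLittleO_const_left.2 (Or.inr ht)
  exact (((h2.const_mul_left a).add (h1.const_mul_left b)).add h0).congr_left (fun T => by ring)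

lemma hObig (t₃ : ℝ) : (fun T : ℝ => (T - t₃)^3) =O[atTop] fun T : ℝ => T^3 := by
  have := (isBigO_refl (fun T : ℝ => T^3) atTop).add (hpoly (-3*t₃) (3*t₃^2) (-t₃^3)).isBigO
  exact this.congr_left (fun T => by ring)

/-- under Assumption 1 (hypotheses `hW4`, `hW3`, `hW2` below),
`E_AA(T) + E_AB(T) = (1/384)·(Σ 1/(s₁s₂s₃s₄))·T⁴
  + (Σ R(2s₁,2s₂,2s₃,2s₄) − (1/96)·(2/(t₂t₄t₅) + 2/(t₁t₄t₅) + t₃/(t₁t₂t₄t₅)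
      + 1/(t₁t₂t₄) + 1/(t₁t₂t₅)))·T³ + o(T³)` as `T → ∞`, both sums running over all five
4-element subsets `{s₁,s₂,s₃,s₄}` of `{t₁,…,t₅}`. -/
theorem EAA_add_EAB_asymptotics (t₁ t₂ t₃ t₄ t₅ : ℝ)
    (h₁ : 0 < t₁) (h₂ : 0 < t₂) (h₃ : 0 < t₃) (h₄ : 0 < t₄) (h₅ : 0 < t₅)
    (R : ℝ → ℝ → ℝ → ℝ → ℝ)
    (hW4 : ∀ σ : Fin 4 → Fin 5, Function.Injective σ →
      (fun T : ℝ => (W (fun i => 2 * ![t₁, t₂, t₃, t₄, t₅] (σ i)) T : ℝ)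
          - T ^ 4 / (384 * ∏ i, ![t₁, t₂, t₃, t₄, t₅] (σ i))
          - R (2 * ![t₁, t₂, t₃, t₄, t₅] (σ 0)) (2 * ![t₁, t₂, t₃, t₄, t₅] (σ 1))
              (2 * ![t₁, t₂, t₃, t₄, t₅] (σ 2)) (2 * ![t₁, t₂, t₃, t₄, t₅] (σ 3)) * T ^ 3)
        =o[atTop] fun T : ℝ => T ^ 3)
    (hW3 : ∀ σ : Fin 3 → Fin 5, Function.Injective σ →
      (fun T : ℝ => (W (fun i => 2 * ![t₁, t₂, t₃, t₄, t₅] (σ i)) T : ℝ)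
          - T ^ 3 / (48 * ∏ i, ![t₁, t₂, t₃, t₄, t₅] (σ i)))
        =o[atTop] fun T : ℝ => T ^ 3)
    (hW2 : ∀ (m : ℕ), m ≤ 2 → ∀ σ : Fin m → Fin 5, Function.Injective σ →
      (fun T : ℝ => (W (fun i => 2 * ![t₁, t₂, t₃, t₄, t₅] (σ i)) T : ℝ))
        =o[atTop] fun T : ℝ => T ^ 3) :
    (fun T : ℝ => (EAA t₁ t₂ t₃ t₄ t₅ T : ℝ) + (EAB t₁ t₂ t₃ t₄ t₅ T : ℝ)
        - (1/384) * (1/(t₂*t₃*t₄*t₅) + 1/(t₁*t₃*t₄*t₅) + 1/(t₁*t₂*t₄*t₅)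
            + 1/(t₁*t₂*t₃*t₅) + 1/(t₁*t₂*t₃*t₄)) * T ^ 4
        - (R (2*t₂) (2*t₃) (2*t₄) (2*t₅) + R (2*t₁) (2*t₃) (2*t₄) (2*t₅)
            + R (2*t₁) (2*t₂) (2*t₄) (2*t₅) + R (2*t₁) (2*t₂) (2*t₃) (2*t₅)
            + R (2*t₁) (2*t₂) (2*t₃) (2*t₄)
            - (1/96) * (2/(t₂*t₄*t₅) + 2/(t₁*t₄*t₅) + t₃/(t₁*t₂*t₄*t₅)
                + 1/(t₁*t₂*t₄) + 1/(t₁*t₂*t₅))) * T ^ 3)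
      =o[atTop] fun T : ℝ => T ^ 3 := by
  have hshift : ∀ f : ℝ → ℝ, f =o[atTop] (fun T : ℝ => T^3) →
      (fun T : ℝ => f (T - t₃)) =o[atTop] (fun T : ℝ => T^3) := by
    intro f h
    have hc : Tendsto (fun T : ℝ => T - t₃) atTop atTop :=
      (tendsto_atTop_add_const_right atTop (-t₃) tendsto_id).congr
        (fun x => (sub_eq_add_neg x t₃).symm)
    exact (h.comp_tendsto hc).trans_isBigO (hObig t₃)
  -- E_AA four-dim terms
  have e1 : (fun T : ℝ => (W ![2*t₁, 2*t₃, 2*t₄, 2*t₅] T : ℝ) - T^4/(384*(t₁*t₃*t₄*t₅))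
      - R (2*t₁) (2*t₃) (2*t₄) (2*t₅) * T^3) =o[atTop] fun T : ℝ => T^3 := by
    have hf : (fun i => 2 * ![t₁, t₂, t₃, t₄, t₅] (![0,2,3,4] i)) = ![2*t₁, 2*t₃, 2*t₄, 2*t₅] := by
      funext i; fin_cases i <;> rfl
    have := hW4 ![0,2,3,4] (by decide)
    rw [hf] at this
    simpa [Fin.prod_univ_four] using this
  have e2 : (fun T : ℝ => (W ![2*t₂, 2*t₃, 2*t₄, 2*t₅] T : ℝ) - T^4/(384*(t₂*t₃*t₄*t₅))
      - R (2*t₂) (2*t₃) (2*t₄) (2*t₅) * T^3) =o[atTop] fun T : ℝ => T^3 := by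
    have hf : (fun i => 2 * ![t₁, t₂, t₃, t₄, t₅] (![1,2,3,4] i)) = ![2*t₂, 2*t₃, 2*t₄, 2*t₅] := by
      funext i; fin_cases i <;> rfl
    have := hW4 ![1,2,3,4] (by decide)
    rw [hf] at this
    simpa [Fin.prod_univ_four] using this
  -- E_AA three-dim terms
  have e3 : (fun T : ℝ => (W ![2*t₁, 2*t₄, 2*t₅] T : ℝ) - T^3/(48*(t₁*t₄*t₅)))
      =o[atTop] fun T : ℝ => T^3 := by
    have hf : (fun i => 2 * ![t₁, t₂, t₃, t₄, t₅] (![0,3,4] i)) = ![2*t₁, 2*t₄, 2*t₅] := by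
      funext i; fin_cases i <;> rfl
    have := hW3 ![0,3,4] (by decide)
    rw [hf] at this
    simpa [Fin.prod_univ_three] using this
  have e4 : (fun T : ℝ => (W ![2*t₂, 2*t₄, 2*t₅] T : ℝ) - T^3/(48*(t₂*t₄*t₅)))
      =o[atTop] fun T : ℝ => T^3 := by
    have hf : (fun i => 2 * ![t₁, t₂, t₃, t₄, t₅] (![1,3,4] i)) = ![2*t₂, 2*t₄, 2*t₅] := by
      funext i; fin_cases i <;> rfl
    have := hW3 ![1,3,4] (by decide)
    rw [hf] at this
    simpa [Fin.prod_univ_three] using this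
  -- low-dimensional terms
  have e5 : (fun T : ℝ => (W ![2*t₁, 2*t₂] T : ℝ)) =o[atTop] fun T : ℝ => T^3 := by
    have hf : (fun i => 2 * ![t₁, t₂, t₃, t₄, t₅] (![0,1] i)) = ![2*t₁, 2*t₂] := by
      funext i; fin_cases i <;> rfl
    have := hW2 2 le_rfl ![0,1] (by decide)
    rwa [hf] at this
  have e6 : (fun T : ℝ => (W ![2*t₁] T : ℝ)) =o[atTop] fun T : ℝ => T^3 := by
    have hf : (fun i => 2 * ![t₁, t₂, t₃, t₄, t₅] (![0] i)) = ![2*t₁] := by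
      funext i; fin_cases i <;> rfl
    have := hW2 1 (by norm_num) ![0] (by decide)
    rwa [hf] at this
  have e7 : (fun T : ℝ => (W ![2*t₂] T : ℝ)) =o[atTop] fun T : ℝ => T^3 := by
    have hf : (fun i => 2 * ![t₁, t₂, t₃, t₄, t₅] (![1] i)) = ![2*t₂] := by
      funext i; fin_cases i <;> rfl
    have := hW2 1 (by norm_num) ![1] (by decide)
    rwa [hf] at this
  -- E_AB terms (shifted)
  have b1 : (fun T : ℝ => (W ![2*t₁, 2*t₂, 2*t₄, 2*t₅] (T - t₃) : ℝ)
      - (T - t₃)^4/(384*(t₁*t₂*t₄*t₅))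
      - R (2*t₁) (2*t₂) (2*t₄) (2*t₅) * (T - t₃)^3) =o[atTop] fun T : ℝ => T^3 := by
    have hf : (fun i => 2 * ![t₁, t₂, t₃, t₄, t₅] (![0,1,3,4] i)) = ![2*t₁, 2*t₂, 2*t₄, 2*t₅] := by
      funext i; fin_cases i <;> rfl
    have h := hW4 ![0,1,3,4] (by decide)
    rw [hf] at h
    have h' : (fun T : ℝ => (W ![2*t₁, 2*t₂, 2*t₄, 2*t₅] T : ℝ) - T^4/(384*(t₁*t₂*t₄*t₅))
        - R (2*t₁) (2*t₂) (2*t₄) (2*t₅) * T^3) =o[atTop] fun T : ℝ => T^3 := by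
      simpa [Fin.prod_univ_four] using h
    exact hshift _ h'
  have b2 : (fun T : ℝ => (W ![2*t₁, 2*t₂, 2*t₃, 2*t₅] (T - t₃) : ℝ)
      - (T - t₃)^4/(384*(t₁*t₂*t₃*t₅))
      - R (2*t₁) (2*t₂) (2*t₃) (2*t₅) * (T - t₃)^3) =o[atTop] fun T : ℝ => T^3 := by
    have hf : (fun i => 2 * ![t₁, t₂, t₃, t₄, t₅] (![0,1,2,4] i)) = ![2*t₁, 2*t₂, 2*t₃, 2*t₅] := by
      funext i; fin_cases i <;> rfl
    have h := hW4 ![0,1,2,4] (by decide)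
    rw [hf] at h
    have h' : (fun T : ℝ => (W ![2*t₁, 2*t₂, 2*t₃, 2*t₅] T : ℝ) - T^4/(384*(t₁*t₂*t₃*t₅))
        - R (2*t₁) (2*t₂) (2*t₃) (2*t₅) * T^3) =o[atTop] fun T : ℝ => T^3 := by
      simpa [Fin.prod_univ_four] using h
    exact hshift _ h'
  have b3 : (fun T : ℝ => (W ![2*t₁, 2*t₂, 2*t₃, 2*t₄] (T - t₃) : ℝ)
      - (T - t₃)^4/(384*(t₁*t₂*t₃*t₄))
      - R (2*t₁) (2*t₂) (2*t₃) (2*t₄) * (T - t₃)^3) =o[atTop] fun T : ℝ => T^3 := by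
    have hf : (fun i => 2 * ![t₁, t₂, t₃, t₄, t₅] (![0,1,2,3] i)) = ![2*t₁, 2*t₂, 2*t₃, 2*t₄] := by
      funext i; fin_cases i <;> rfl
    have h := hW4 ![0,1,2,3] (by decide)
    rw [hf] at h
    have h' : (fun T : ℝ => (W ![2*t₁, 2*t₂, 2*t₃, 2*t₄] T : ℝ) - T^4/(384*(t₁*t₂*t₃*t₄))
        - R (2*t₁) (2*t₂) (2*t₃) (2*t₄) * T^3) =o[atTop] fun T : ℝ => T^3 := by
      simpa [Fin.prod_univ_four] using h
    exact hshift _ h'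
  have b4 : (fun T : ℝ => (W ![2*t₁, 2*t₂] (T - t₃) : ℝ)) =o[atTop] fun T : ℝ => T^3 :=
    hshift _ e5
  -- leftover quadratic
  set Sp : ℝ := 1/(t₁*t₂*t₄*t₅) + 1/(t₁*t₂*t₃*t₅) + 1/(t₁*t₂*t₃*t₄) with hSp
  set SR : ℝ := R (2*t₁) (2*t₂) (2*t₄) (2*t₅) + R (2*t₁) (2*t₂) (2*t₃) (2*t₅)
      + R (2*t₁) (2*t₂) (2*t₃) (2*t₄) with hSR
  have pq := hpoly (6*t₃^2/384 * Sp - 3*t₃*SR) (-4*t₃^3/384 * Sp + 3*t₃^2*SR)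
      (t₃^4/384*Sp - t₃^3*SR)
  have E := ((((((((((e1.add e2).sub e3).sub e4).add e5).add e6).add e7).add b1).add
      b2).add b3).sub b4).add pq
  refine E.congr_left fun T => ?_
  have c1 : (1:ℝ)/(t₁*t₂*t₄) = t₃/(t₁*t₂*t₃*t₄) := by field_simp
  have c2 : (1:ℝ)/(t₁*t₂*t₅) = t₃/(t₁*t₂*t₃*t₅) := by field_simp
  simp only [EAA, EAB, hSp, hSR]
  push_cast
  rw [c1, c2]
  ring
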